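/- Suppose F₂ is atomless conditionally to F₁. Let A ∈ F₁ and let C ∈ F₂ with C ⊂ A be such that E[1_C | F₁] > 0 almost surely on A. Then there exists a decreasing sequence of F₂-measurable sets (B_n)_{n ≥ 0} with B_n ⊂ C such that for each n, 0 < E[1_{B_n} | F₁] ≤ 2^{−n} almost surely on A. -/

import Mathlib

open MeasureTheory

/-- `F₂` is atomless conditionally to `F₁`: for every `A ∈ F₂` there is `B ∈ F₂`, `B ⊆ A`,
with `0 < E[1_B | F₁] < E[1_A | F₁]` almost surely on the set `{E[1_A | F₁] > 0}`. -/
def CondAtomless {Ω : Type*} (m1 m2 : MeasurableSpace Ω) (μ : @Measure Ω m2) : Prop :=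
  ∀ A : Set Ω, MeasurableSet[m2] A →
    ∃ B : Set Ω, MeasurableSet[m2] B ∧ B ⊆ A ∧
      ∀ᵐ ω ∂μ, 0 < (μ[A.indicator (fun _ => (1 : ℝ)) | m1]) ω →
        0 < (μ[B.indicator (fun _ => (1 : ℝ)) | m1]) ω ∧
        (μ[B.indicator (fun _ => (1 : ℝ)) | m1]) ω <
          (μ[A.indicator (fun _ => (1 : ℝ)) | m1]) ω

/-- Halving lemma: from a conditionally atomless situation, any measurable set `B` has a
measurable subset `D` whose conditional expectation is positive and at most half that of `B`,
a.e. on `{E[1_B|m1] > 0}`. -/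
theorem halving_aux {Ω : Type*} {m1 m2 : MeasurableSpace Ω} (hm : m1 ≤ m2)
    (μ : @Measure Ω m2) [IsProbabilityMeasure μ]
    (hca : CondAtomless m1 m2 μ) (B : Set Ω) (hB : MeasurableSet[m2] B) :
    ∃ D : Set Ω, MeasurableSet[m2] D ∧ D ⊆ B ∧
      ∀ᵐ ω ∂μ, 0 < (μ[B.indicator (fun _ => (1 : ℝ)) | m1]) ω →
        0 < (μ[D.indicator (fun _ => (1 : ℝ)) | m1]) ω ∧
        (μ[D.indicator (fun _ => (1 : ℝ)) | m1]) ω ≤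
          (μ[B.indicator (fun _ => (1 : ℝ)) | m1]) ω / 2 := by
  obtain ⟨B', hB', hsub, hae⟩ := hca B hB
  set f := μ[B.indicator (fun _ => (1 : ℝ)) | m1] with hf_def
  set g := μ[B'.indicator (fun _ => (1 : ℝ)) | m1] with hg_def
  have hf_meas : StronglyMeasurable[m1] f := stronglyMeasurable_condExp
  have hg_meas : StronglyMeasurable[m1] g := stronglyMeasurable_condExp
  set S : Set Ω := {ω | g ω ≤ f ω / 2} with hS_def
  have hS1 : MeasurableSet[m1] S :=
    measurableSet_le hg_meas.measurable (hf_meas.measurable.div_const 2)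
  have hS2 : MeasurableSet[m2] S := hm _ hS1
  refine ⟨(B' ∩ S) ∪ ((B \ B') ∩ Sᶜ), ((hB'.inter hS2).union ((hB.diff hB').inter hS2.compl)),
    ?_, ?_⟩
  · intro ω hω
    rcases hω with h | h
    · exact hsub h.1
    · exact h.1.1
  -- integrability of indicators
  have hint : ∀ s : Set Ω, MeasurableSet[m2] s →
      Integrable (s.indicator (fun _ => (1 : ℝ))) μ :=
    fun s hs => (integrable_const (1 : ℝ)).indicator hs
  -- decomposition of the indicator of D
  have hD_eq : ((B' ∩ S) ∪ ((B \ B') ∩ Sᶜ)).indicator (fun _ => (1 : ℝ)) =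
      (S.indicator (B'.indicator (fun _ => (1 : ℝ)))) +
      (Sᶜ.indicator ((B \ B').indicator (fun _ => (1 : ℝ)))) := by
    funext ω
    by_cases h1 : ω ∈ S <;> by_cases h2 : ω ∈ B' <;> by_cases h3 : ω ∈ B <;>
      simp [Set.indicator_apply, h1, h2, h3]
  have hcond1 : μ[((B' ∩ S) ∪ ((B \ B') ∩ Sᶜ)).indicator (fun _ => (1 : ℝ)) | m1]
      =ᵐ[μ] S.indicator g + Sᶜ.indicator (μ[(B \ B').indicator (fun _ => (1 : ℝ)) | m1]) := by
    rw [hD_eq]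
    refine (condExp_add ((hint _ hB').indicator hS2) ((hint _ (hB.diff hB')).indicator
      hS2.compl) m1).trans ?_
    exact Filter.EventuallyEq.add (condExp_indicator (hint _ hB') hS1)
      (condExp_indicator (hint _ (hB.diff hB')) hS1.compl)
  -- conditional expectation of the complement part
  have hsplit : B.indicator (fun _ => (1 : ℝ)) =
      (B \ B').indicator (fun _ => (1 : ℝ)) + B'.indicator (fun _ => (1 : ℝ)) := by
    funext ω
    by_cases h1 : ω ∈ B'
    · simp [Set.indicator_apply, h1, hsub h1]
    · by_cases h2 : ω ∈ B <;> simp [Set.indicator_apply, h1, h2]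
  have hcond2 : μ[(B \ B').indicator (fun _ => (1 : ℝ)) | m1] + g =ᵐ[μ] f := by
    rw [hf_def, hg_def, hsplit]
    exact (condExp_add (hint _ (hB.diff hB')) (hint _ hB') m1).symm
  filter_upwards [hae, hcond1, hcond2] with ω hω h1 h2 hfpos
  obtain ⟨hgpos, hglt⟩ := hω hfpos
  rw [show (μ[((B' ∩ S) ∪ ((B \ B') ∩ Sᶜ)).indicator (fun _ => (1 : ℝ)) | m1]) ω
      = S.indicator g ω + Sᶜ.indicator (μ[(B \ B').indicator (fun _ => (1 : ℝ)) | m1]) ω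
      from h1]
  by_cases hωS : ω ∈ S
  · rw [Set.indicator_of_mem hωS, Set.indicator_of_notMem (by simpa using hωS), add_zero]
    exact ⟨hgpos, hωS⟩
  · rw [Set.indicator_of_notMem hωS, Set.indicator_of_mem (by simpa using hωS), zero_add]
    have hval : (μ[(B \ B').indicator (fun _ => (1 : ℝ)) | m1]) ω = f ω - g ω := by
      have := h2
      simp only [Pi.add_apply] at this
      linarith [this]
    rw [hval]
    have hS' : ¬ (g ω ≤ f ω / 2) := hωS
    push_neg at hS'
    constructor <;> linarith

/-- If `F₂` is atomless conditionally to `F₁`, `A ∈ F₁` and `C ∈ F₂`, `C ⊆ A`, is such that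
`E[1_C | F₁] > 0` a.s. on `A`, then there is a decreasing sequence `(B_n)` of `F₂`-measurable
subsets of `C` with `0 < E[1_{B_n} | F₁] ≤ 2^{-n}` a.s. on `A`. -/
theorem stmt_4 {Ω : Type*} {m1 m2 : MeasurableSpace Ω} (hm : m1 ≤ m2)
    (μ : @Measure Ω m2) [IsProbabilityMeasure μ]
    (hca : CondAtomless m1 m2 μ)
    (A C : Set Ω) (hA : MeasurableSet[m1] A) (hC : MeasurableSet[m2] C) (hCA : C ⊆ A)
    (hCpos : ∀ᵐ ω ∂μ, ω ∈ A → 0 < (μ[C.indicator (fun _ => (1 : ℝ)) | m1]) ω) :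
    ∃ B : ℕ → Set Ω, (∀ n, MeasurableSet[m2] (B n)) ∧ (∀ n, B (n + 1) ⊆ B n) ∧
      (∀ n, B n ⊆ C) ∧
      ∀ n, ∀ᵐ ω ∂μ, ω ∈ A →
        0 < (μ[(B n).indicator (fun _ => (1 : ℝ)) | m1]) ω ∧
        (μ[(B n).indicator (fun _ => (1 : ℝ)) | m1]) ω ≤ (2 : ℝ) ^ (-(n : ℝ)) := by
  choose D hDmeas hDsub hDae using fun (B : Set Ω) (hB : MeasurableSet[m2] B) =>
    halving_aux hm μ hca B hB
  -- the sequence of sets together with their measurability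
  let seq : ℕ → {s : Set Ω // MeasurableSet[m2] s} := fun n =>
    Nat.rec ⟨C, hC⟩ (fun _ p => ⟨D p.1 p.2, hDmeas p.1 p.2⟩) n
  refine ⟨fun n => (seq n).1, fun n => (seq n).2, fun n => hDsub _ _, ?_, ?_⟩
  · intro n
    induction n with
    | zero => exact subset_rfl
    | succ k ih => exact (hDsub (seq k).1 (seq k).2).trans ih
  · intro n
    induction n with
    | zero =>
      have hle1 : μ[C.indicator (fun _ => (1 : ℝ)) | m1] ≤ᵐ[μ]
          μ[(fun _ => (1 : ℝ)) | m1] :=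
        condExp_mono ((integrable_const (1 : ℝ)).indicator hC) (integrable_const 1)
          (Filter.Eventually.of_forall fun ω =>
            Set.indicator_le_self' (fun _ _ => zero_le_one) ω)
      rw [condExp_const hm] at hle1
      filter_upwards [hCpos, hle1] with ω h1 h2 hωA
      refine ⟨h1 hωA, ?_⟩
      simpa [seq] using h2
    | succ k ih =>
      have hkey := hDae (seq k).1 (seq k).2
      filter_upwards [ih, hkey] with ω h1 h2 hωA
      obtain ⟨hpos, hle⟩ := h1 hωA
      obtain ⟨hpos', hle'⟩ := h2 hpos
      refine ⟨hpos', ?_⟩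
      have hpow : (2 : ℝ) ^ (-((k + 1 : ℕ) : ℝ)) = (2 : ℝ) ^ (-(k : ℝ)) / 2 := by
        push_cast
        rw [neg_add, Real.rpow_add (by norm_num), Real.rpow_neg_one]
        ring
      rw [hpow]
      calc (μ[(seq (k+1)).1.indicator (fun _ => (1 : ℝ)) | m1]) ω
          ≤ (μ[(seq k).1.indicator (fun _ => (1 : ℝ)) | m1]) ω / 2 := hle'
        _ ≤ (2 : ℝ) ^ (-(k : ℝ)) / 2 := by linarith
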